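/- arXiv:1409.5478 — 9 statements merged into one kernel-verified Lean document; each statement's English description precedes it below -/
import Mathlib

section
/- Let K be a field and let V and W be finite-dimensional K-vector spaces with dim V = r ≥ 1 and dim W = m. Let c be a natural number with c ≤ r·m and c·r ≥ m. Then there exists a linear subspace H ⊆ V ⊗ W with dim H = r·m − c such that the only vector w ∈ W with v ⊗ w ∈ H for all v ∈ V is w = 0. -/
set_option maxRecDepth 4000


open TensorProduct Module

lemma aux_exists_submodule {K M : Type*} [Field K] [AddCommGroup M] [Module K M]
    [FiniteDimensional K M] (N : Submodule K M) (d : ℕ) (h : d ≤ finrank K N) :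
    ∃ P : Submodule K M, P ≤ N ∧ finrank K P = d := by
  let bN := finBasis K ↥N
  have li0 : LinearIndependent K (fun j : Fin (finrank K ↥N) => (bN j : M)) :=
    bN.linearIndependent.map' N.subtype N.ker_subtype
  have li : LinearIndependent K (fun j : Fin d => (bN (Fin.castLE h j) : M)) :=
    li0.comp (Fin.castLE h) (Fin.castLE_injective h)
  refine ⟨Submodule.span K (Set.range fun j : Fin d => (bN (Fin.castLE h j) : M)), ?_, ?_⟩
  · rw [Submodule.span_le]
    rintro _ ⟨j, rfl⟩
    exact (bN (Fin.castLE h j)).2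
  · rw [finrank_span_eq_card li, Fintype.card_fin]

/-- If `dim V = r ≥ 1`, `dim W = m`, `c ≤ r·m` and `c·r ≥ m`, then there exists a
subspace `H ⊆ V ⊗ W` of codimension `c` containing no subspace of the form `V ⊗ w`
with `w ≠ 0`. -/
theorem stmt_2 (K V W : Type*) [Field K] [AddCommGroup V] [Module K V]
    [AddCommGroup W] [Module K W] [FiniteDimensional K V] [FiniteDimensional K W]
    (r m c : ℕ) (hr : 1 ≤ r) (hV : finrank K V = r) (hW : finrank K W = m)
    (hc : c ≤ r * m) (hcr : m ≤ c * r) :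
    ∃ H : Submodule K (V ⊗[K] W), finrank K H = r * m - c ∧
      ∀ w : W, (∀ v : V, v ⊗ₜ[K] w ∈ H) → w = 0 := by
  classical
  -- bases
  let bV : Basis (Fin r) K V := finBasisOfFinrankEq K V hV
  let bW : Basis (Fin m) K W := finBasisOfFinrankEq K W hW
  -- an injection `Fin m ↪ Fin r × Fin c`
  have hcpos : ∀ j : Fin m, 0 < c := by
    intro j
    rcases Nat.eq_zero_or_pos c with h | h
    · subst h
      simp at hcr
      exact absurd j.2 (by omega)
    · exact h
  let ι : Fin m → Fin r × Fin c := fun j =>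
    (⟨j.1 / c, by
        have hc0 := hcpos j
        have hlt : j.1 < r * c := lt_of_lt_of_le j.2 (by rw [Nat.mul_comm]; exact hcr)
        exact Nat.div_lt_iff_lt_mul hc0 |>.2 hlt⟩,
     ⟨j.1 % c, Nat.mod_lt _ (hcpos j)⟩)
  have ιinj : Function.Injective ι := by
    intro j j' h
    have h1 : j.1 / c = j'.1 / c := congrArg (fun p => (Prod.fst p).1) h
    have h2 : j.1 % c = j'.1 % c := congrArg (fun p => (Prod.snd p).1) h
    have : j.1 = j'.1 := by
      rw [← Nat.div_add_mod j.1 c, ← Nat.div_add_mod j'.1 c, h1, h2]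
    exact Fin.ext this
  -- injective linear map `J : (Fin m → K) →ₗ (Fin r → Fin c → K)`
  let J : (Fin m → K) →ₗ[K] (Fin r → Fin c → K) :=
    ∑ j : Fin m, (LinearMap.proj j : (Fin m → K) →ₗ[K] K).smulRight
      (Pi.single (ι j).1 (Pi.single (ι j).2 (1 : K)))
  have hJ : ∀ (x : Fin m → K) (j : Fin m), J x (ι j).1 (ι j).2 = x j := by
    intro x j
    simp only [J, LinearMap.sum_apply, LinearMap.smulRight_apply, LinearMap.proj_apply,
      Finset.sum_apply, Pi.smul_apply]
    rw [Finset.sum_eq_single j]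
    · simp
    · intro j' _ hj'
      have hne : ι j' ≠ ι j := fun h => hj' (ιinj h)
      show x j' • (Pi.single (ι j').1 (Pi.single (ι j').2 (1 : K)) : Fin r → Fin c → K) (ι j).1 (ι j).2 = 0
      rcases eq_or_ne (ι j).1 (ι j').1 with h1 | h1
      · rw [Pi.single_apply, if_pos h1, Pi.single_apply, if_neg, smul_zero]
        intro h2
        exact hne (Prod.ext h1.symm h2.symm)
      · rw [Pi.single_apply, if_neg h1]
        simp
    · intro h; exact absurd (Finset.mem_univ j) h
  let Ψ : W →ₗ[K] (Fin r → Fin c → K) := J ∘ₗ (bW.equivFun : W ≃ₗ[K] (Fin m → K)).toLinearMap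
  have Ψinj : Function.Injective Ψ := by
    intro w w' h
    apply bW.equivFun.injective
    funext j
    have := congrArg (fun f => f (ι j).1 (ι j).2) h
    simpa only [Ψ, LinearMap.comp_apply, LinearEquiv.coe_coe, hJ] using this
  -- the bilinear map and the induced map on the tensor product
  let B : V →ₗ[K] W →ₗ[K] (Fin c → K) :=
    LinearMap.mk₂ K (fun v w => ∑ i, bV.equivFun v i • Ψ w i)
      (by intro v v' w; simp [map_add, add_smul, Finset.sum_add_distrib])
      (by intro a v w; simp [map_smul, smul_smul, Finset.smul_sum])
      (by intro v w w'; simp [map_add, smul_add, Finset.sum_add_distrib])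
      (by
        intro a v w
        show ∑ i, bV.equivFun v i • Ψ (a • w) i = a • ∑ i, bV.equivFun v i • Ψ w i
        rw [map_smul, Finset.smul_sum]
        refine Finset.sum_congr rfl fun i _ => ?_
        rw [Pi.smul_apply, smul_comm])
  let φ : V ⊗[K] W →ₗ[K] (Fin c → K) := TensorProduct.lift B
  have key : ∀ (i : Fin r) (w : W), φ (bV i ⊗ₜ[K] w) = Ψ w i := by
    intro i w
    have h0 : φ (bV i ⊗ₜ[K] w) = ∑ i', bV.equivFun (bV i) i' • Ψ w i' := rfl
    rw [h0, Finset.sum_eq_single i]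
    · rw [Basis.equivFun_self _ i i, if_pos rfl, one_smul]
    · intro i' _ hi'
      rw [Basis.equivFun_self, if_neg (Ne.symm hi'), zero_smul]
    · intro h; exact absurd (Finset.mem_univ i) h
  -- dimension count
  have hdim : r * m - c ≤ finrank K ↥(LinearMap.ker φ) := by
    have h1 := LinearMap.finrank_range_add_finrank_ker φ
    have h2 : finrank K (V ⊗[K] W) = r * m := by
      rw [Module.finrank_tensorProduct, hV, hW]
    have h3 : finrank K ↥(LinearMap.range φ) ≤ c := by
      have := Submodule.finrank_le (LinearMap.range φ)
      simpa [Module.finrank_fin_fun] using this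
    omega
  obtain ⟨H, hle, hrank⟩ := aux_exists_submodule (LinearMap.ker φ) (r * m - c) hdim
  refine ⟨H, hrank, ?_⟩
  intro w hw
  have hΨ : Ψ w = 0 := by
    funext i k
    have : φ (bV i ⊗ₜ[K] w) = 0 := hle (hw (bV i))
    rw [key] at this
    simpa using congrFun this k
  have : w = 0 := by
    apply Ψinj
    simp [hΨ]
  exact this
end

section
/- Let (r₁, c₁, d₁) and (r₂, c₂, d₂) be triples of real numbers with r₁ ≠ 0, r₂ ≠ 0, and μ₁ ≠ μ₂, where μᵢ = cᵢ/rᵢ. Set Δᵢ = μᵢ²/2 − dᵢ/rᵢ and σ = (μ₁ + μ₂)/2 − (Δ₁ − Δ₂)/(μ₁ − μ₂). Then (σ − μ₁)² − 2Δ₁ = (σ − μ₂)² − 2Δ₂ =: ρ², and for every (s, t) ∈ ℝ² with t ≠ 0, the equality (−d₁ + s·c₁ − ((s² − t²)/2)·r₁) · t·(c₂ − s·r₂) = (−d₂ + s·c₂ − ((s² − t²)/2)·r₂) · t·(c₁ − s·r₁) holds if and only if (s − σ)² + t² = ρ². -/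
/-- The potential Bridgeland wall `W(ξ₁, ξ₂)` for two characters of nonzero rank and
distinct slopes is the semicircle with center `(σ, 0)` and radius `ρ`, where
`σ = (μ₁ + μ₂)/2 − (Δ₁ − Δ₂)/(μ₁ − μ₂)` and `ρ² = (σ − μ₁)² − 2Δ₁ = (σ − μ₂)² − 2Δ₂`. -/
theorem stmt_3 (r₁ c₁ d₁ r₂ c₂ d₂ μ₁ μ₂ Δ₁ Δ₂ σ : ℝ)
    (hr₁ : r₁ ≠ 0) (hr₂ : r₂ ≠ 0)
    (hμ₁ : μ₁ = c₁ / r₁) (hμ₂ : μ₂ = c₂ / r₂) (hμ : μ₁ ≠ μ₂)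
    (hΔ₁ : Δ₁ = μ₁ ^ 2 / 2 - d₁ / r₁) (hΔ₂ : Δ₂ = μ₂ ^ 2 / 2 - d₂ / r₂)
    (hσ : σ = (μ₁ + μ₂) / 2 - (Δ₁ - Δ₂) / (μ₁ - μ₂)) :
    (σ - μ₁) ^ 2 - 2 * Δ₁ = (σ - μ₂) ^ 2 - 2 * Δ₂ ∧
    ∀ s t : ℝ, t ≠ 0 →
      ((-d₁ + s * c₁ - ((s ^ 2 - t ^ 2) / 2) * r₁) * (t * (c₂ - s * r₂)) =
        (-d₂ + s * c₂ - ((s ^ 2 - t ^ 2) / 2) * r₂) * (t * (c₁ - s * r₁)) ↔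
        (s - σ) ^ 2 + t ^ 2 = (σ - μ₁) ^ 2 - 2 * Δ₁) := by
  have hμμ : μ₁ - μ₂ ≠ 0 := sub_ne_zero.mpr hμ
  have hc₁ : c₁ = μ₁ * r₁ := by rw [hμ₁, div_mul_cancel₀ _ hr₁]
  have hc₂ : c₂ = μ₂ * r₂ := by rw [hμ₂, div_mul_cancel₀ _ hr₂]
  have hd₁ : d₁ = r₁ * (μ₁ ^ 2 / 2 - Δ₁) := by rw [hΔ₁]; field_simp; ring
  have hd₂ : d₂ = r₂ * (μ₂ ^ 2 / 2 - Δ₂) := by rw [hΔ₂]; field_simp; ring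
  have hσ' : σ * (μ₁ - μ₂) = (μ₁ + μ₂) * (μ₁ - μ₂) / 2 - (Δ₁ - Δ₂) := by
    rw [hσ]; field_simp
  refine ⟨by linear_combination (-2 : ℝ) * hσ', fun s t ht => ?_⟩
  have key :
      (-d₁ + s * c₁ - ((s ^ 2 - t ^ 2) / 2) * r₁) * (t * (c₂ - s * r₂)) -
        (-d₂ + s * c₂ - ((s ^ 2 - t ^ 2) / 2) * r₂) * (t * (c₁ - s * r₁)) =
      t * r₁ * r₂ * (μ₂ - μ₁) / 2 *
        ((s - σ) ^ 2 + t ^ 2 - ((σ - μ₁) ^ 2 - 2 * Δ₁)) := by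
    rw [hc₁, hc₂, hd₁, hd₂]
    linear_combination (t * r₁ * r₂ * (μ₁ - s)) * hσ'
  have hk : t * r₁ * r₂ * (μ₂ - μ₁) / 2 ≠ 0 := by
    have h21 : μ₂ - μ₁ ≠ 0 := fun h => hμμ (by linarith)
    positivity
  constructor
  · intro h
    have h0 : t * r₁ * r₂ * (μ₂ - μ₁) / 2 *
        ((s - σ) ^ 2 + t ^ 2 - ((σ - μ₁) ^ 2 - 2 * Δ₁)) = 0 := by
      rw [← key]; linarith
    have := (mul_eq_zero.mp h0).resolve_left hk
    linarith
  · intro h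
    have h0 : (s - σ) ^ 2 + t ^ 2 - ((σ - μ₁) ^ 2 - 2 * Δ₁) = 0 := by linarith
    rw [h0, mul_zero] at key
    linarith
end

section
/- Let μ ∈ ℝ and Δ ≥ 0. For every pair (x, t) of real numbers with t ≠ 0 and x ≠ μ, there exists a unique s ∈ ℝ such that (x − s)² + t² = (s − μ)² − 2Δ. Moreover this unique s satisfies (s − μ)² > 2Δ, and s < μ if and only if x < μ. -/
/-- Every point `(x, t)` of the half-plane `t ≠ 0` off the vertical line `x = μ` lies on a
unique potential Bridgeland wall: there is a unique `s` with `(x − s)² + t² = (s − μ)² − 2Δ`;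
moreover this `s` satisfies `(s − μ)² > 2Δ`, and `s < μ` iff `x < μ`. -/
theorem stmt_5 (μ Δ : ℝ) (hΔ : 0 ≤ Δ) (x t : ℝ) (ht : t ≠ 0) (hx : x ≠ μ) :
    (∃! s : ℝ, (x - s) ^ 2 + t ^ 2 = (s - μ) ^ 2 - 2 * Δ) ∧
    ∀ s : ℝ, (x - s) ^ 2 + t ^ 2 = (s - μ) ^ 2 - 2 * Δ →
      2 * Δ < (s - μ) ^ 2 ∧ (s < μ ↔ x < μ) := by
  have hx' : μ - x ≠ 0 := sub_ne_zero.mpr (Ne.symm hx)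
  have ht2 : 0 < t ^ 2 := pow_pos (abs_pos.mpr ht) 2 |>.trans_le (by rw [sq_abs])
  constructor
  · refine ⟨(μ ^ 2 - x ^ 2 - t ^ 2 - 2 * Δ) / (2 * (μ - x)), ?_, ?_⟩
    · field_simp
      ring
    · intro y hy
      have h2 : 2 * y * (μ - x) = μ ^ 2 - x ^ 2 - t ^ 2 - 2 * Δ := by nlinarith [hy]
      field_simp
      linarith [h2]
  · intro s hs
    have h1 : 2 * Δ < (s - μ) ^ 2 := by nlinarith [sq_nonneg (x - s), ht2]
    refine ⟨h1, ?_⟩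
    have h2 : (2 * s - x - μ) * (x - μ) > 0 := by nlinarith [ht2]
    constructor
    · intro hsμ
      by_contra hxm
      push_neg at hxm
      have : μ < x := lt_of_le_of_ne hxm (Ne.symm hx)
      nlinarith
    · intro hxμ
      nlinarith
end

section
/- Let μ ∈ ℝ, Δ ≥ 0, and let s₁ < s₂ < μ be real numbers with (s₂ − μ)² > 2Δ. Then (s₁ − μ)² > 2Δ and √((s₁ − μ)² − 2Δ) − √((s₂ − μ)² − 2Δ) ≥ s₂ − s₁, with strict inequality when Δ > 0. In particular, the closed disk with center (s₂, 0) and radius √((s₂ − μ)² − 2Δ) is contained in the closed disk with center (s₁, 0) and radius √((s₁ − μ)² − 2Δ). -/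
/-- The semicircular potential Bridgeland walls left of the vertical wall are nested:
if `s₁ < s₂ < μ` and `(s₂ − μ)² > 2Δ`, then `(s₁ − μ)² > 2Δ`, the difference of radii
`√((s₁ − μ)² − 2Δ) − √((s₂ − μ)² − 2Δ)` is at least `s₂ − s₁` (strictly if `Δ > 0`),
and the closed disk with center `(s₂,0)` and radius `√((s₂ − μ)² − 2Δ)` is contained
in the one with center `(s₁, 0)` and radius `√((s₁ − μ)² − 2Δ)`. -/
theorem stmt_6 (μ Δ s₁ s₂ : ℝ) (hΔ : 0 ≤ Δ) (h₁₂ : s₁ < s₂) (h₂μ : s₂ < μ)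
    (h₂ : 2 * Δ < (s₂ - μ) ^ 2) :
    2 * Δ < (s₁ - μ) ^ 2 ∧
    s₂ - s₁ ≤ Real.sqrt ((s₁ - μ) ^ 2 - 2 * Δ) - Real.sqrt ((s₂ - μ) ^ 2 - 2 * Δ) ∧
    (0 < Δ → s₂ - s₁ < Real.sqrt ((s₁ - μ) ^ 2 - 2 * Δ) - Real.sqrt ((s₂ - μ) ^ 2 - 2 * Δ)) ∧
    ∀ p : ℝ × ℝ, (p.1 - s₂) ^ 2 + p.2 ^ 2 ≤ (s₂ - μ) ^ 2 - 2 * Δ →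
      (p.1 - s₁) ^ 2 + p.2 ^ 2 ≤ (s₁ - μ) ^ 2 - 2 * Δ := by
  have hb0 : 0 < μ - s₂ := by linarith
  have hd0 : 0 < s₂ - s₁ := by linarith
  have hA : 2 * Δ < (s₁ - μ) ^ 2 := by nlinarith
  set r₂ := Real.sqrt ((s₂ - μ) ^ 2 - 2 * Δ) with hr2
  have hr2nn : 0 ≤ r₂ := Real.sqrt_nonneg _
  have hr2sq : r₂ ^ 2 = (s₂ - μ) ^ 2 - 2 * Δ := Real.sq_sqrt (by linarith)
  have hr2b : r₂ ≤ μ - s₂ := by nlinarith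
  have key : (r₂ + (s₂ - s₁)) ^ 2 ≤ (s₁ - μ) ^ 2 - 2 * Δ := by nlinarith
  have hr1 : r₂ + (s₂ - s₁) ≤ Real.sqrt ((s₁ - μ) ^ 2 - 2 * Δ) :=
    Real.le_sqrt_of_sq_le key
  refine ⟨hA, by linarith, ?_, ?_⟩
  · intro hΔ0
    have hr2b' : r₂ < μ - s₂ := by nlinarith
    have key' : (r₂ + (s₂ - s₁)) ^ 2 < (s₁ - μ) ^ 2 - 2 * Δ := by nlinarith
    have h : r₂ + (s₂ - s₁) < Real.sqrt ((s₁ - μ) ^ 2 - 2 * Δ) := by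
      exact Real.lt_sqrt_of_sq_lt key'
    linarith
  · rintro ⟨x, y⟩ hp
    simp only at hp ⊢
    have h1 : x - s₂ ≤ r₂ := by nlinarith
    nlinarith
end

section
/- Let r be a positive integer and let p, q ∈ ℚ with p < q, q − p = 1/r, and reduced denominators p.den ≤ r and q.den ≤ r. Assume that every rational number x with p < x < q has reduced denominator greater than r. Then p.den · q.den = r, and p.den = 1 or q.den = 1 (i.e., p or q is an integer). -/
lemma my_den_dvd (m : ℤ) (n : ℕ) : ((m : ℚ) / (n : ℚ)).den ∣ n := by
  have h := Rat.den_dvd m n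
  rw [Rat.divInt_eq_div] at h
  exact_mod_cast h

lemma my_mul_den (p : ℚ) : p * (p.den : ℚ) = (p.num : ℚ) := by
  have h := Rat.num_div_den p
  have hd : ((p.den : ℚ)) ≠ 0 := by positivity
  rw [div_eq_iff hd] at h
  linarith

lemma my_solve (r : ℕ) (hr : 2 ≤ r) (a : ℤ) (hco : a.natAbs.Coprime r) :
    ∃ e : ℕ, e < r ∧ (r : ℤ) ∣ a * e + 1 := by
  haveI : NeZero r := ⟨by omega⟩
  have hu : IsUnit ((a : ZMod r)) := by
    have h1 : IsUnit ((a.natAbs : ZMod r)) := (ZMod.isUnit_iff_coprime _ _).mpr hco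
    rcases Int.natAbs_eq a with h | h
    · rw [h, Int.cast_natCast]; exact h1
    · rw [h, Int.cast_neg, Int.cast_natCast]; exact h1.neg
  set u : ZMod r := -(a : ZMod r)⁻¹ with hu_def
  refine ⟨u.val, ZMod.val_lt u, ?_⟩
  rw [← ZMod.intCast_zmod_eq_zero_iff_dvd]
  push_cast
  rw [(ZMod.natCast_val u).trans (ZMod.cast_id _ _), hu_def, mul_neg,
    ZMod.mul_inv_of_unit _ hu]
  ring

/-- Farey sequence argument: if `p < q` are rationals with denominators at most `r`
differing by `1/r`, such that every rational strictly between them has denominator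
greater than `r`, then `p.den · q.den = r` and `p` or `q` is an integer. -/
theorem stmt_7 (r : ℕ) (hr : 0 < r) (p q : ℚ) (hpq : p < q)
    (hdiff : q - p = 1 / (r : ℚ)) (hp : p.den ≤ r) (hq : q.den ≤ r)
    (hbetween : ∀ x : ℚ, p < x → x < q → r < x.den) :
    p.den * q.den = r ∧ (p.den = 1 ∨ q.den = 1) := by
  by_cases hr1 : r = 1
  · subst hr1
    have h1 : p.den = 1 := le_antisymm hp p.pos
    have h2 : q.den = 1 := le_antisymm hq q.pos
    simp [h1, h2]
  have hr2 : 2 ≤ r := by omega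
  have hrQ : (0 : ℚ) < (r : ℚ) := by positivity
  have hq_eq : q = p + 1 / (r : ℚ) := by linarith
  have hno : ∀ x : ℚ, p < x → x < q → ¬ (x.den ≤ r) := fun x h1 h2 h3 =>
    absurd (hbetween x h1 h2) (not_lt.mpr h3)
  -- Step 1: p * r is an integer
  have hden1 : (p * r).den = 1 := by
    by_contra hne
    set m : ℤ := ⌊p * (r : ℚ)⌋ + 1 with hm_def
    have hmc : (m : ℚ) = ((⌊p * (r : ℚ)⌋ : ℚ)) + 1 := by rw [hm_def]; push_cast; ring
    have hfl : ((⌊p * (r : ℚ)⌋ : ℚ)) < p * r := by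
      refine lt_of_le_of_ne (Int.floor_le _) fun h => hne ?_
      rw [← h, Rat.den_intCast]
    have hflu := Int.lt_floor_add_one (p * (r : ℚ))
    have hx1 : p < (m : ℚ) / r := by
      rw [lt_div_iff₀ hrQ, hmc]
      linarith
    have hx2 : (m : ℚ) / r < q := by
      have h1 : ((m : ℚ) - 1) / r < p := by
        rw [div_lt_iff₀ hrQ, hmc]
        linarith
      have h2 : (m : ℚ) / r = ((m : ℚ) - 1) / r + 1 / r := by field_simp; ring
      rw [h2, hq_eq]
      linarith
    exact hno _ hx1 hx2 (Nat.le_of_dvd hr (my_den_dvd m r))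
  have hdenq1 : (q * r).den = 1 := by
    have : q * r = ((p * r).num + 1 : ℤ) := by
      rw [hq_eq]
      push_cast
      rw [(Rat.den_eq_one_iff _).mp hden1]
      field_simp
    rw [this, Rat.den_intCast]
  -- Step 2: den divides r
  have key : ∀ x : ℚ, (x * r).den = 1 → x.den ∣ r := by
    intro x hx
    have h1 : x = ((x * r).num : ℚ) / r := by
      rw [(Rat.den_eq_one_iff _).mp hx]
      field_simp
    calc x.den = (((x * r).num : ℚ) / (r : ℚ)).den := by rw [← h1]
      _ ∣ r := my_den_dvd _ r
  have hpr : p.den ∣ r := key p hden1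
  have hqr : q.den ∣ r := key q hdenq1
  -- Step 3: mediant gives p.den + q.den > r
  have hbQ : (0 : ℚ) < (p.den : ℚ) := by positivity
  have hdQ : (0 : ℚ) < (q.den : ℚ) := by positivity
  have hpb := my_mul_den p
  have hqd := my_mul_den q
  have hsum : r < p.den + q.den := by
    set x : ℚ := ((p.num + q.num : ℤ) : ℚ) / ((p.den + q.den : ℕ) : ℚ) with hx_def
    have hsQ : (0 : ℚ) < ((p.den + q.den : ℕ) : ℚ) := by positivity
    have hpd : p * (q.den : ℚ) < (q.num : ℚ) := by
      rw [← hqd]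
      exact mul_lt_mul_of_pos_right hpq hdQ
    have hqb : (p.num : ℚ) < q * (p.den : ℚ) := by
      rw [← hpb]
      exact mul_lt_mul_of_pos_right hpq hbQ
    have hx1 : p < x := by
      rw [hx_def, lt_div_iff₀ hsQ]
      push_cast
      nlinarith
    have hx2 : x < q := by
      rw [hx_def, div_lt_iff₀ hsQ]
      push_cast
      nlinarith
    have := hbetween x hx1 hx2
    have hdvd : x.den ∣ p.den + q.den := my_den_dvd _ _
    exact lt_of_lt_of_le this (Nat.le_of_dvd (by positivity) hdvd)
  -- Step 4: one of the dens equals r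
  have hcase : p.den = r ∨ q.den = r := by
    by_contra h
    push_neg at h
    obtain ⟨k, hk⟩ := hpr
    obtain ⟨l, hl⟩ := hqr
    have hk2 : 2 ≤ k := by
      rcases Nat.lt_or_ge k 2 with h' | h'
      · interval_cases k <;> omega
      · exact h'
    have hl2 : 2 ≤ l := by
      rcases Nat.lt_or_ge l 2 with h' | h'
      · interval_cases l <;> omega
      · exact h'
    nlinarith [p.pos, q.pos]
  -- Step 5
  rcases hcase with hb | hd
  · -- p.den = r : show q is an integer
    have hco : p.num.natAbs.Coprime r := by rw [← hb]; exact p.reduced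
    obtain ⟨e, helt, hedvd⟩ := my_solve r hr2 p.num hco
    obtain ⟨m, hm⟩ := hedvd
    have hmQ : (p.num : ℚ) * e + 1 = (r : ℚ) * m := by exact_mod_cast hm
    have hp_eq : p = (p.num : ℚ) / r := by
      rw [← hb]
      exact (Rat.num_div_den p).symm
    have he0 : e ≠ 0 := by
      rintro rfl
      simp at hm
      have : (r : ℤ) ∣ 1 := ⟨m, hm⟩
      have := Int.le_of_dvd one_pos this
      omega
    by_cases he1 : e = 1
    · subst he1
      have hq' : q = (m : ℚ) := by
        rw [hq_eq, hp_eq]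
        push_cast at hmQ
        field_simp
        linarith
      have hqden : q.den = 1 := by rw [hq', Rat.den_intCast]
      exact ⟨by rw [hb, hqden, mul_one], Or.inr hqden⟩
    · exfalso
      have he2 : (2 : ℚ) ≤ (e : ℚ) := by exact_mod_cast (by omega : 2 ≤ e)
      have heQ : (0 : ℚ) < (e : ℚ) := by positivity
      have hx1 : p < (m : ℚ) / e := by
        rw [hp_eq, div_lt_div_iff₀ hrQ heQ]
        nlinarith
      have hx2 : (m : ℚ) / e < q := by
        have hpr' : p * (r : ℚ) = (p.num : ℚ) := by rw [← hb]; exact hpb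
        have hq' : q = ((p.num : ℚ) + 1) / r := by
          rw [hq_eq, eq_div_iff hrQ.ne']
          have h5 : (p + 1 / (r : ℚ)) * r = p * r + 1 := by field_simp
          rw [h5, hpr']
        rw [hq', div_lt_div_iff₀ heQ hrQ]
        nlinarith
      exact hno _ hx1 hx2 (le_trans (Nat.le_of_dvd (by omega) (my_den_dvd m e)) (by omega))
  · -- q.den = r : show p is an integer
    have hco : (-q.num).natAbs.Coprime r := by
      rw [Int.natAbs_neg, ← hd]; exact q.reduced
    obtain ⟨e, helt, hedvd⟩ := my_solve r hr2 (-q.num) hco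
    obtain ⟨m, hm⟩ := hedvd
    have hmQ : (q.num : ℚ) * e - 1 = (r : ℚ) * (-m) := by
      have : -q.num * e + 1 = (r : ℤ) * m := hm
      have h2 : ((-q.num * e + 1 : ℤ) : ℚ) = (((r : ℤ) * m : ℤ) : ℚ) := by rw [this]
      push_cast at h2
      linarith
    have hq_eq2 : q = (q.num : ℚ) / r := by
      rw [← hd]
      exact (Rat.num_div_den q).symm
    have hqr' : q * (r : ℚ) = (q.num : ℚ) := by rw [← hd]; exact hqd
    have hp_eq : p = ((q.num : ℚ) - 1) / r := by
      rw [eq_div_iff hrQ.ne']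
      have h3 : p * (r : ℚ) = q * r - 1 := by
        have h4 : p = q - 1 / (r : ℚ) := by linarith
        rw [h4]; field_simp
      rw [h3, hqr']
    have he0 : e ≠ 0 := by
      rintro rfl
      simp at hm
      have : (r : ℤ) ∣ 1 := ⟨m, hm⟩
      have := Int.le_of_dvd one_pos this
      omega
    by_cases he1 : e = 1
    · subst he1
      have hp' : p = ((-m : ℤ) : ℚ) := by
        rw [hp_eq]
        push_cast at hmQ
        push_cast
        field_simp
        linarith
      have hpden : p.den = 1 := by rw [hp', Rat.den_intCast]
      exact ⟨by rw [hd, hpden, one_mul], Or.inl hpden⟩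
    · exfalso
      have he2 : (2 : ℚ) ≤ (e : ℚ) := by exact_mod_cast (by omega : 2 ≤ e)
      have heQ : (0 : ℚ) < (e : ℚ) := by positivity
      have hx1 : p < ((-m : ℤ) : ℚ) / e := by
        rw [hp_eq, div_lt_div_iff₀ hrQ heQ]
        push_cast
        linarith [hmQ, he2]
      have hx2 : ((-m : ℤ) : ℚ) / e < q := by
        rw [hq_eq2, div_lt_div_iff₀ heQ hrQ]
        push_cast
        linarith [hmQ]
      exact hno _ hx1 hx2 (le_trans (Nat.le_of_dvd (by omega) (my_den_dvd (-m) e)) (by omega))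
end

section
/- Let e, f, k be positive integers with f ≥ e + 1 and f − e ≤ k ≤ f. Then (f − k)² · (e + 1) ≤ e² · k · f; equivalently, as rational numbers, (k − f)²/(2·k·f) ≤ e²/(2·(e + 1)). -/
/-- Integer optimization step in Proposition 8.2: for positive integers `e, f, k` with
`f ≥ e + 1` and `f − e ≤ k ≤ f`, we have `(f − k)²(e + 1) ≤ e²·k·f`; equivalently,
`(k − f)²/(2kf) ≤ e²/(2(e + 1))` as rational numbers. -/
theorem stmt_9 (e f k : ℕ) (he : 0 < e) (hf : 0 < f) (hk : 0 < k)
    (hfe : e + 1 ≤ f) (hk₁ : f - e ≤ k) (hk₂ : k ≤ f) :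
    (f - k) ^ 2 * (e + 1) ≤ e ^ 2 * k * f ∧
    ((k : ℚ) - (f : ℚ)) ^ 2 / (2 * k * f) ≤ (e : ℚ) ^ 2 / (2 * (e + 1)) := by
  have hd : f - k ≤ e := by omega
  have hkf : e + 1 ≤ k * f := le_trans hfe (le_trans (Nat.le_mul_of_pos_left f hk) (le_refl _))
  have hint : (f - k) ^ 2 * (e + 1) ≤ e ^ 2 * k * f := by
    calc (f - k) ^ 2 * (e + 1) ≤ e ^ 2 * (e + 1) := by
          exact Nat.mul_le_mul_right _ (Nat.pow_le_pow_left hd 2)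
      _ ≤ e ^ 2 * (k * f) := Nat.mul_le_mul_left _ hkf
      _ = e ^ 2 * k * f := by ring
  refine ⟨hint, ?_⟩
  have hfk : (k : ℚ) - f = -((f - k : ℕ) : ℚ) := by
    push_cast [Nat.cast_sub hk₂]; ring
  rw [hfk, neg_sq, div_le_div_iff₀ (by positivity) (by positivity)]
  have := hint
  have hcast : ((f - k : ℕ) : ℚ) ^ 2 * (e + 1) ≤ (e : ℚ) ^ 2 * k * f := by
    exact_mod_cast hint
  nlinarith [hcast]
end

section
/- Let e, f, k be positive integers with f ≥ e + 1 and f − e ≤ k ≤ f, and let ρ, Δ, μ, s be real numbers with ρ > 0, Δ ≥ 0, (μ − s)² = ρ² + 2Δ, and (k + f)·ρ ≤ (f − k)·(μ − s). Then ρ² ≤ (e²/(2·(e + 1)))·Δ. -/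
/-- Numerical core of Proposition 8.2: if a rank `e` sheaf with slope `μ` and discriminant
`Δ` is destabilized along a wall of center `(s,0)` and radius `ρ` by a rank `f > e`
subobject with kernel of rank `k`, `max(1, f − e) ≤ k ≤ f`, and
`(k + f)ρ ≤ (f − k)(μ − s)`, then `ρ² ≤ e²Δ/(2(e + 1))`. -/
theorem stmt_11 (e f k : ℕ) (he : 0 < e) (hf : 0 < f) (hk : 0 < k)
    (hfe : e + 1 ≤ f) (hk₁ : f - e ≤ k) (hk₂ : k ≤ f)
    (ρ Δ μ s : ℝ) (hρ : 0 < ρ) (hΔ : 0 ≤ Δ)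
    (hws : (μ - s) ^ 2 = ρ ^ 2 + 2 * Δ)
    (hineq : ((k : ℝ) + (f : ℝ)) * ρ ≤ ((f : ℝ) - (k : ℝ)) * (μ - s)) :
    ρ ^ 2 ≤ ((e : ℝ) ^ 2 / (2 * ((e : ℝ) + 1))) * Δ := by
  have hef : e ≤ f := le_trans (Nat.le_succ e) hfe
  have hk₁' : (f : ℝ) - (e : ℝ) ≤ k := by
    have h : ((f - e : ℕ) : ℝ) ≤ k := by exact_mod_cast hk₁
    rwa [Nat.cast_sub hef] at h
  have hk₂' : (k : ℝ) ≤ f := by exact_mod_cast hk₂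
  have hkpos : (1 : ℝ) ≤ k := by exact_mod_cast hk
  have hepos : (1 : ℝ) ≤ e := by exact_mod_cast he
  have hfe' : (e : ℝ) + 1 ≤ f := by exact_mod_cast hfe
  -- k < f
  have hkfn : k < f := by
    rcases lt_or_eq_of_le hk₂ with h | h
    · exact h
    · exfalso
      subst h
      nlinarith
  have hkf : (k : ℝ) + 1 ≤ f := by exact_mod_cast hkfn
  have hx : 0 < μ - s := by nlinarith
  have key : 2 * (k : ℝ) * f * ρ ^ 2 ≤ ((f : ℝ) - k) ^ 2 * Δ := by
    nlinarith [sq_nonneg (((f : ℝ) - k) * (μ - s) - ((k : ℝ) + f) * ρ),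
      mul_le_mul hineq hineq (by positivity) (le_of_lt (by nlinarith))]
  have hd : (f : ℝ) - k ≤ e := by linarith
  have hd0 : (0 : ℝ) ≤ (f : ℝ) - k := by linarith
  have hsq2 : ((f : ℝ) - k) ^ 2 ≤ (e : ℝ) ^ 2 := by nlinarith
  have hkf2 : (e : ℝ) + 1 ≤ (k : ℝ) * f := by nlinarith
  have hcoef : ((e : ℝ) + 1) * ((f : ℝ) - k) ^ 2 ≤ (e : ℝ) ^ 2 * k * f := calc
    ((e : ℝ) + 1) * ((f : ℝ) - k) ^ 2 ≤ ((e : ℝ) + 1) * (e : ℝ) ^ 2 :=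
      mul_le_mul_of_nonneg_left hsq2 (by positivity)
    _ = (e : ℝ) ^ 2 * ((e : ℝ) + 1) := by ring
    _ ≤ (e : ℝ) ^ 2 * ((k : ℝ) * f) := mul_le_mul_of_nonneg_left hkf2 (sq_nonneg _)
    _ = (e : ℝ) ^ 2 * k * f := by ring
  have h1 := mul_le_mul_of_nonneg_right hcoef hΔ
  have h2 := mul_le_mul_of_nonneg_left key (by positivity : (0 : ℝ) ≤ (e : ℝ) + 1)
  have hkfpos : (0 : ℝ) < (k : ℝ) * f := by positivity
  rw [div_mul_eq_mul_div, le_div_iff₀ (by positivity)]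
  have h3 : ((e : ℝ) + 1) * (2 * (k : ℝ) * f * ρ ^ 2) ≤ (e : ℝ) ^ 2 * k * f * Δ := by
    refine h2.trans ?_
    calc ((e : ℝ) + 1) * (((f : ℝ) - k) ^ 2 * Δ)
        = ((e : ℝ) + 1) * ((f : ℝ) - k) ^ 2 * Δ := by ring
      _ ≤ (e : ℝ) ^ 2 * k * f * Δ := h1
  refine le_of_mul_le_mul_left ?_ hkfpos
  calc (k : ℝ) * f * (ρ ^ 2 * (2 * ((e : ℝ) + 1)))
      = ((e : ℝ) + 1) * (2 * (k : ℝ) * f * ρ ^ 2) := by ring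
    _ ≤ (e : ℝ) ^ 2 * k * f * Δ := h3
    _ = (k : ℝ) * f * ((e : ℝ) ^ 2 * Δ) := by ring
end

section
/- Let C be an abelian category that is linear over a field K, and let 0 → F →^ι E →^π Q → 0 be a short exact sequence in C. Assume Hom(F, Q) = 0, that every endomorphism of F is a scalar multiple of the identity of F, and that every endomorphism of Q is a scalar multiple of the identity of Q. Then every morphism F → E is a scalar multiple of ι, and every morphism E → Q is a scalar multiple of π. -/
open CategoryTheory CategoryTheory.Limits

/-- In a `K`-linear abelian category, if `0 → F → E → Q → 0` is exact, `Hom(F, Q) = 0`,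
and all endomorphisms of `F` and of `Q` are scalars, then every morphism `F → E` is a
scalar multiple of `ι` and every morphism `E → Q` is a scalar multiple of `π`. -/
theorem stmt_14 (K : Type*) [Field K] {C : Type*} [Category C] [Abelian C] [Linear K C]
    (F E Q : C) (ι : F ⟶ E) (π : E ⟶ Q) (w : ι ≫ π = 0)
    (hse : (ShortComplex.mk ι π w).ShortExact)
    (hFQ : ∀ f : F ⟶ Q, f = 0)
    (hF : ∀ f : F ⟶ F, ∃ c : K, f = c • 𝟙 F)
    (hQ : ∀ f : Q ⟶ Q, ∃ c : K, f = c • 𝟙 Q) :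
    (∀ f : F ⟶ E, ∃ c : K, f = c • ι) ∧ (∀ g : E ⟶ Q, ∃ c : K, g = c • π) := by
  have hmono := hse.mono_f
  have hepi := hse.epi_g
  constructor
  · intro f
    obtain ⟨l, hl⟩ := hse.exact.lift' (S := ShortComplex.mk ι π w) f (hFQ _)
    obtain ⟨c, hc⟩ := hF l
    exact ⟨c, by rw [← hl, hc, Linear.smul_comp, Category.id_comp]⟩
  · intro g
    obtain ⟨l, hl⟩ := hse.exact.desc' (S := ShortComplex.mk ι π w) g (hFQ _)
    obtain ⟨c, hc⟩ := hQ l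
    exact ⟨c, by rw [← hl, hc, Linear.comp_smul, Category.comp_id]⟩
end

section
/- Let C be an abelian category that is linear over a field K. Let 0 → F →^{ι₁} E₁ →^{π₁} Q → 0 and 0 → F →^{ι₂} E₂ →^{π₂} Q → 0 be short exact sequences in C with the same F and Q. Assume Hom(F, Q) = 0, that every endomorphism of F is a scalar multiple of the identity of F, and that every endomorphism of Q is a scalar multiple of the identity of Q. If ψ : E₁ → E₂ is an isomorphism, then there exist nonzero scalars c, c′ ∈ K with ψ ∘ ι₁ = c • ι₂ and π₂ ∘ ψ = c′ • π₁. -/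
open CategoryTheory CategoryTheory.Limits

/-- Lemma 7.2: given two extensions `0 → F → Eᵢ → Q → 0` in a `K`-linear abelian category
with `Hom(F, Q) = 0` and all endomorphisms of `F` and `Q` scalars, any isomorphism
`ψ : E₁ ≅ E₂` carries `ι₁` to a nonzero multiple of `ι₂` and `π₁` to a nonzero multiple
of `π₂`. -/
theorem stmt_15 (K : Type*) [Field K] {C : Type*} [Category C] [Abelian C] [Linear K C]
    (F E₁ E₂ Q : C) (ι₁ : F ⟶ E₁) (π₁ : E₁ ⟶ Q) (w₁ : ι₁ ≫ π₁ = 0)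
    (ι₂ : F ⟶ E₂) (π₂ : E₂ ⟶ Q) (w₂ : ι₂ ≫ π₂ = 0)
    (hse₁ : (ShortComplex.mk ι₁ π₁ w₁).ShortExact)
    (hse₂ : (ShortComplex.mk ι₂ π₂ w₂).ShortExact)
    (hFQ : ∀ f : F ⟶ Q, f = 0)
    (hF : ∀ f : F ⟶ F, ∃ c : K, f = c • 𝟙 F)
    (hQ : ∀ f : Q ⟶ Q, ∃ c : K, f = c • 𝟙 Q)
    (ψ : E₁ ⟶ E₂) (hψ : IsIso ψ) :
    ∃ c c' : K, c ≠ 0 ∧ c' ≠ 0 ∧ ι₁ ≫ ψ = c • ι₂ ∧ ψ ≫ π₂ = c' • π₁ := by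
  have hm₁ : Mono ι₁ := hse₁.mono_f
  have hm₂ : Mono ι₂ := hse₂.mono_f
  have he₁ : Epi π₁ := hse₁.epi_g
  have he₂ : Epi π₂ := hse₂.epi_g
  -- lift ι₁ ≫ ψ through ι₂
  have hk : (ι₁ ≫ ψ) ≫ π₂ = 0 := hFQ _
  obtain ⟨φ, hφ⟩ := hse₂.exact.lift' (ι₁ ≫ ψ) hk
  obtain ⟨c, hc⟩ := hF φ
  have h1 : ι₁ ≫ ψ = c • ι₂ := by
    rw [← hφ, hc, Linear.smul_comp, Category.id_comp]
  -- descend ψ ≫ π₂ through π₁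
  have hk' : ι₁ ≫ ψ ≫ π₂ = 0 := by rw [← Category.assoc]; exact hk
  obtain ⟨θ, hθ⟩ := hse₁.exact.desc' (ψ ≫ π₂) hk'
  obtain ⟨c', hc'⟩ := hQ θ
  have h2 : ψ ≫ π₂ = c' • π₁ := by
    rw [← hθ, hc', Linear.comp_smul, Category.comp_id]
  -- handle degenerate scalars
  have hc0 : ∃ d : K, d ≠ 0 ∧ ι₁ ≫ ψ = d • ι₂ := by
    by_cases h : c = 0
    · -- then ι₁ = 0, so F is zero and ι₂ = 0 as well
      have hι₁ : ι₁ = 0 := by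
        have : (ι₁ ≫ ψ) ≫ inv ψ = (0 : F ⟶ E₁) := by
          rw [h1, h, zero_smul, zero_comp]
        simpa using this
      have hidF : 𝟙 F = 0 := by
        rw [← cancel_mono ι₁, Category.id_comp, hι₁, zero_comp]
      have hι₂ : ι₂ = 0 := by rw [← Category.id_comp ι₂, hidF, zero_comp]
      exact ⟨1, one_ne_zero, by rw [hι₁, hι₂, zero_comp, smul_zero]⟩
    · exact ⟨c, h, h1⟩
  have hc'0 : ∃ d' : K, d' ≠ 0 ∧ ψ ≫ π₂ = d' • π₁ := by
    by_cases h : c' = 0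
    · have hπ₂ : π₂ = 0 := by
        have : inv ψ ≫ (ψ ≫ π₂) = (0 : E₂ ⟶ Q) := by
          rw [h2, h, zero_smul, comp_zero]
        simpa using this
      have hidQ : 𝟙 Q = 0 := by
        rw [← cancel_epi π₂, Category.comp_id, hπ₂]; simp
      have hπ₁ : π₁ = 0 := by rw [← Category.comp_id π₁, hidQ, comp_zero]
      exact ⟨1, one_ne_zero, by rw [hπ₁, hπ₂, comp_zero, smul_zero]⟩
    · exact ⟨c', h, h2⟩
  obtain ⟨d, hd, hd1⟩ := hc0
  obtain ⟨d', hd', hd2⟩ := hc'0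
  exact ⟨d, d', hd, hd', hd1, hd2⟩
end
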